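/- For all y > 0, λ_B(y) ≤ 2·(1 + |log y|)·(√y − 1)^2, where λ_B(y) = y·log y − y + 1. -/

import Mathlib

/-- The Boltzmann function. -/
noncomputable def lamB (y : ℝ) : ℝ := y * Real.log y - y + 1

private lemma hasDerivAt_pade (z : ℝ) (hz : 0 < z) :
    HasDerivAt (fun z : ℝ => (z^2 - 1)/(2*z) - Real.log z) ((z-1)^2/(2*z^2)) z := by
  have h1 : HasDerivAt (fun z : ℝ => z^2 - 1) (2*z) z := by
    simpa using (hasDerivAt_pow 2 z).sub_const 1
  have h2 : HasDerivAt (fun z : ℝ => 2*z) 2 z := by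
    simpa using (hasDerivAt_id z).const_mul 2
  have h3 : HasDerivAt (fun z : ℝ => (z^2 - 1)/(2*z) - Real.log z)
      ((2 * z * (2 * z) - (z ^ 2 - 1) * 2) / (2 * z) ^ 2 - z⁻¹) z :=
    (h1.div h2 (by positivity)).sub (Real.hasDerivAt_log hz.ne')
  convert h3 using 1
  field_simp
  ring

private lemma log_le_pade {x : ℝ} (hx : 1 ≤ x) : Real.log x ≤ (x^2 - 1) / (2*x) := by
  set f : ℝ → ℝ := fun z => (z^2 - 1)/(2*z) - Real.log z with hf
  have hmono : MonotoneOn f (Set.Ici 1) := by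
    apply monotoneOn_of_deriv_nonneg (convex_Ici 1)
    · intro z hz
      have hz0 : (0:ℝ) < z := lt_of_lt_of_le one_pos hz
      exact (hasDerivAt_pade z hz0).continuousAt.continuousWithinAt
    · intro z hz
      rw [interior_Ici] at hz
      exact (hasDerivAt_pade z (lt_trans one_pos hz)).differentiableAt.differentiableWithinAt
    · intro z hz
      rw [interior_Ici] at hz
      have hz0 : (0:ℝ) < z := lt_trans one_pos hz
      rw [(hasDerivAt_pade z hz0).deriv]
      positivity
  have h1 : f 1 ≤ f x := hmono (Set.self_mem_Ici) hx hx
  have : f 1 = 0 := by simp [hf]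
  rw [this] at h1
  simp only [hf] at h1
  linarith

private lemma hasDerivAt_pade2 (z : ℝ) (hz : 0 < z) :
    HasDerivAt (fun z : ℝ => 2*(z-1)/(z+1) - Real.log z) (-((z-1)^2/(z*(z+1)^2))) z := by
  have h1 : HasDerivAt (fun z : ℝ => 2*(z-1)) 2 z := by
    simpa using ((hasDerivAt_id z).sub_const 1).const_mul 2
  have h2 : HasDerivAt (fun z : ℝ => z+1) 1 z := (hasDerivAt_id z).add_const 1
  have h3 : HasDerivAt (fun z : ℝ => 2*(z-1)/(z+1) - Real.log z)
      ((2 * (z + 1) - 2 * (z - 1) * 1) / (z + 1) ^ 2 - z⁻¹) z :=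
    (h1.div h2 (ne_of_gt (by linarith : (0:ℝ) < z + 1))).sub (Real.hasDerivAt_log hz.ne')
  convert h3 using 1
  field_simp
  ring

private lemma log_le_pade2 {x : ℝ} (hx0 : 0 < x) (hx : x ≤ 1) :
    Real.log x ≤ 2*(x-1)/(x+1) := by
  set f : ℝ → ℝ := fun z => 2*(z-1)/(z+1) - Real.log z with hf
  have hanti : AntitoneOn f (Set.Ioc 0 1) := by
    apply antitoneOn_of_deriv_nonpos (convex_Ioc 0 1)
    · intro z hz
      exact (hasDerivAt_pade2 z hz.1).continuousAt.continuousWithinAt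
    · intro z hz
      rw [interior_Ioc] at hz
      exact (hasDerivAt_pade2 z hz.1).differentiableAt.differentiableWithinAt
    · intro z hz
      rw [interior_Ioc] at hz
      obtain ⟨hz1, hz2⟩ := hz
      rw [(hasDerivAt_pade2 z hz1).deriv]
      have : 0 < z * (z+1)^2 := by positivity
      have : 0 ≤ (z-1)^2 / (z*(z+1)^2) := by positivity
      linarith
  have h1 : f 1 ≤ f x := hanti ⟨hx0, hx⟩ ⟨one_pos, le_refl 1⟩ hx
  have : f 1 = 0 := by norm_num [hf]
  rw [this] at h1
  simp only [hf] at h1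
  linarith

/-- For all `y > 0`, `λ_B(y) ≤ 2 (1 + |log y|) (√y - 1)^2`. -/
theorem lamB_le (y : ℝ) (hy : 0 < y) :
    lamB y ≤ 2 * (1 + |Real.log y|) * (Real.sqrt y - 1) ^ 2 := by
  have hs2 : Real.sqrt y ^ 2 = y := Real.sq_sqrt hy.le
  set s := Real.sqrt y with hsdef
  have hs : 0 < s := Real.sqrt_pos.2 hy
  have hlog : Real.log y = 2 * Real.log s := by
    rw [← hs2, Real.log_pow]; norm_num
  set L := Real.log s with hL
  rw [lamB, hlog, ← hs2]
  rcases le_total 1 s with hs1 | hs1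
  · -- case s ≥ 1
    have hL0 : 0 ≤ L := Real.log_nonneg hs1
    rw [abs_of_nonneg (by linarith : (0:ℝ) ≤ 2 * L)]
    have hP : L ≤ (s^2 - 1) / (2*s) := log_le_pade hs1
    have h2sL : L * (2*s) ≤ s^2 - 1 := (le_div_iff₀ (by positivity)).mp hP
    rcases le_or_gt 0 (2*s^2 - 8*s + 4) with hc | hc
    · nlinarith [mul_nonneg hc hL0, sq_nonneg (s-1), mul_nonneg (sub_nonneg.2 hs1) (sub_nonneg.2 hs1)]
    · have key : (2*s^2 - 8*s + 4) * (s^2 - 1) ≤ (2*s^2 - 8*s + 4) * (L * (2*s)) :=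
        mul_le_mul_of_nonpos_left h2sL hc.le
      have hcube : 0 ≤ (s-1)^3 * (s+2) :=
        mul_nonneg (pow_nonneg (by linarith) 3) (by linarith)
      nlinarith [key, hcube, mul_nonneg hL0 (sub_nonneg.2 hs1)]
  · -- case s ≤ 1
    have hL0 : L ≤ 0 := Real.log_nonpos hs.le hs1
    rw [abs_of_nonpos (by linarith : 2 * L ≤ 0)]
    have hP : L ≤ 2*(s-1)/(s+1) := log_le_pade2 hs hs1
    have hmul : L * (s+1) ≤ 2*(s-1) := (le_div_iff₀ (by linarith)).mp hP
    have hcpos : (0:ℝ) ≤ 6*s^2 - 8*s + 4 := by nlinarith [sq_nonneg (s-1)]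
    have key : (6*s^2 - 8*s + 4) * (L * (s+1)) ≤ (6*s^2 - 8*s + 4) * (2*(s-1)) :=
      mul_le_mul_of_nonneg_left hmul hcpos
    have hcube : 0 ≤ (1-s)^3 := pow_nonneg (by linarith) 3
    nlinarith [key, hcube]
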